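/- arXiv:2108.11313 — 2 statements merged into one kernel-verified Lean document; each statement's English description precedes it below -/
import Mathlib

section
/- Let A ⊆ {2,3,4,...} and let ω be a cyclic word over A represented by uv with u ≠ u* and v ≠ v* (where w* is the reversal of w). If either (u < u* and v* < v) or (u* < u and v < v*) in the lexicographic order, then K̇^∘(u*v) > K̇^∘(uv). -/
/-- Semi-regular continuant read from the last element: helper on the reversed list. -/
def contKsf {R : Type*} [Ring R] : List R → R
  | [] => 1
  | [a] => a
  | a :: b :: l => a * contKsf (b :: l) - contKsf l

/-- Semi-regular continuant `K̇`. -/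
def contKs {R : Type*} [Ring R] (l : List R) : R := contKsf l.reverse

/-- Cyclic semi-regular continuant: `K̇∘(x₁…xₙ) = K̇(x₁…xₙ) − K̇(x₂…xₙ₋₁)`. -/
def cycKs {R : Type*} [Ring R] (l : List R) : R := contKs l - contKs l.tail.dropLast

/-- The lexicographic order on words induced by the order of the alphabet, with the
convention that `u ≺ v` whenever `v` is a proper prefix of `u`. -/
def wlt {A : Type*} [LinearOrder A] (u v : List A) : Prop :=
  (v ≠ u ∧ v <+: u) ∨
    ∃ (p s t : List A) (x y : A), x < y ∧ u = p ++ x :: s ∧ v = p ++ y :: t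

lemma contKsf_cons (a : ℤ) (m : List ℤ) (h : m ≠ []) :
    contKsf (a :: m) = a * contKsf m - contKsf m.tail := by
  cases m with
  | nil => simp at h
  | cons b l => rfl

theorem contKsf_concat : ∀ (m : List ℤ), m ≠ [] → ∀ x : ℤ,
    contKsf (m ++ [x]) = x * contKsf m - contKsf m.dropLast
  | [a], _, x => by simp [contKsf]; ring
  | [a, b], _, x => by simp [contKsf]; ring
  | a :: b :: c :: r, _, x => by
    have h1 := contKsf_concat (b :: c :: r) (by simp) x
    have h2 := contKsf_concat (c :: r) (by simp) x
    simp only [List.cons_append] at h1 h2 ⊢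
    rw [show contKsf (a :: b :: c :: (r ++ [x])) =
      a * contKsf (b :: c :: (r ++ [x])) - contKsf (c :: (r ++ [x])) from rfl, h1, h2]
    simp [contKsf]
    ring

theorem contKsf_reverse : ∀ (m : List ℤ), contKsf m.reverse = contKsf m
  | [] => rfl
  | [a] => rfl
  | a :: b :: r => by
    have key : (b :: r).reverse ≠ [] := by simp
    have : (a :: b :: r).reverse = (b :: r).reverse ++ [a] := by simp
    rw [this, contKsf_concat _ key a]
    have hd : ((b :: r) : List ℤ).reverse.dropLast = r.reverse := by
      rw [List.reverse_cons, List.dropLast_concat]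
    rw [hd, contKsf_reverse (b :: r), contKsf_reverse r]
    rw [contKsf_cons a (b :: r) (by simp)]
    rfl
termination_by m => m.length
decreasing_by all_goals first | (simp; omega) | simp

lemma contKs_reverse (l : List ℤ) : contKs l.reverse = contKs l := by
  unfold contKs
  rw [List.reverse_reverse, contKsf_reverse]

lemma contKs_nil : contKs ([] : List ℤ) = 1 := rfl
lemma contKs_single (x : ℤ) : contKs [x] = x := rfl

lemma contKs_concat (l : List ℤ) (h : l ≠ []) (x : ℤ) :
    contKs (l ++ [x]) = x * contKs l - contKs l.dropLast := by
  unfold contKs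
  rw [List.reverse_append, List.reverse_singleton, List.singleton_append,
    contKsf_cons x l.reverse (by simpa using h),
    List.tail_reverse, contKsf_reverse]

lemma contKs_cons (x : ℤ) (l : List ℤ) (h : l ≠ []) :
    contKs (x :: l) = x * contKs l - contKs l.tail := by
  have := contKs_concat l.reverse (by simpa using h) x
  rw [← contKs_reverse (x :: l)]
  simp only [List.reverse_cons] at *
  rw [this, contKs_reverse]
  congr 1
  rw [← contKs_reverse l.tail]
  congr 1
  have := List.tail_reverse (l := l.reverse)
  rw [List.reverse_reverse] at this
  rw [this, List.reverse_reverse]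

def good (l : List ℤ) : Prop := ∀ i ∈ l, 2 ≤ i

lemma good_tail {l : List ℤ} (h : good l) : good l.tail :=
  fun i hi => h i (List.mem_of_mem_tail hi)

lemma good_dropLast {l : List ℤ} (h : good l) : good l.dropLast :=
  fun i hi => h i (List.dropLast_subset l hi)

lemma good_reverse {l : List ℤ} (h : good l) : good l.reverse :=
  fun i hi => h i (by simpa using hi)

theorem grow : ∀ (l : List ℤ), l ≠ [] → good l →
    contKs l.tail < contKs l ∧ 1 ≤ contKs l.tail
  | [x], _, hg => by
    simp [contKs_single, contKs_nil]
    exact lt_of_lt_of_le one_lt_two (hg x (by simp))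
  | x :: b :: r, _, hg => by
    have ih := grow (b :: r) (by simp) (good_tail hg)
    have hx : 2 ≤ x := hg x (by simp)
    have hrec := contKs_cons x (b :: r) (by simp)
    constructor
    · rw [List.tail_cons, hrec]
      nlinarith [ih.1, ih.2]
    · rw [List.tail_cons]
      nlinarith [ih.1, ih.2]

lemma contKs_pos (l : List ℤ) (hg : good l) : 1 ≤ contKs l := by
  cases l with
  | nil => simp [contKs_nil]
  | cons a m =>
    have := grow (a :: m) (by simp) hg
    linarith [this.1, this.2]

lemma contKs_tail_lt (l : List ℤ) (h : l ≠ []) (hg : good l) :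
    contKs l.tail < contKs l := (grow l h hg).1

theorem lexlt : ∀ (p : List ℤ) (s t : List ℤ) (x y : ℤ), x < y →
    good (p ++ x :: s) → good (p ++ y :: t) →
    contKs (p ++ x :: s) * contKs (p ++ y :: t).tail <
      contKs (p ++ y :: t) * contKs (p ++ x :: s).tail
  | [], s, t, x, y, hxy, hgs, hgt => by
    simp only [List.nil_append, List.tail_cons]
    have hs1 : (1:ℤ) ≤ contKs s := contKs_pos s (good_tail hgs)
    have ht1 : (1:ℤ) ≤ contKs t := contKs_pos t (good_tail hgt)
    cases s with
    | nil =>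
      rw [contKs_single]
      cases t with
      | nil => simpa [contKs_single, contKs_nil] using hxy
      | cons b r =>
        rw [contKs_cons y (b :: r) (by simp), contKs_nil]
        have := contKs_tail_lt (b :: r) (by simp) (good_tail hgt)
        have := contKs_pos (b :: r).tail (good_tail (good_tail hgt))
        nlinarith
    | cons a m =>
      have hKa := contKs_cons x (a :: m) (by simp)
      have h1 := contKs_tail_lt (a :: m) (by simp) (good_tail hgs)
      have h2 := contKs_pos (a :: m).tail (good_tail (good_tail hgs))
      cases t with
      | nil =>
        rw [contKs_nil, contKs_single, hKa]
        nlinarith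
      | cons b r =>
        rw [hKa, contKs_cons y (b :: r) (by simp)]
        have h3 := contKs_tail_lt (b :: r) (by simp) (good_tail hgt)
        have h4 := contKs_pos (b :: r).tail (good_tail (good_tail hgt))
        nlinarith [mul_pos (show (0:ℤ) < contKs (a :: m) by linarith)
            (show (0:ℤ) < contKs (b :: r) - contKs (b :: r).tail by linarith),
          mul_nonneg (show (0:ℤ) ≤ contKs (a :: m).tail - 1 by linarith)
            (show (0:ℤ) ≤ contKs (b :: r) by linarith),
          mul_nonneg (show (0:ℤ) ≤ y - x - 1 by linarith)
            (mul_nonneg (show (0:ℤ) ≤ contKs (a :: m) by linarith)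
              (show (0:ℤ) ≤ contKs (b :: r) by linarith))]
  | z :: p, s, t, x, y, hxy, hgs, hgt => by
    have ih := lexlt p s t x y hxy (good_tail hgs) (good_tail hgt)
    have hna : (p ++ x :: s) ≠ [] := by simp
    have hnb : (p ++ y :: t) ≠ [] := by simp
    simp only [List.cons_append, List.tail_cons]
    rw [contKs_cons z _ hna, contKs_cons z _ hnb]
    nlinarith [ih]

lemma tail_dropLast' (l : List ℤ) : l.tail.dropLast = l.dropLast.tail := by
  cases l with
  | nil => rfl
  | cons a m =>
    cases m with
    | nil => rfl
    | cons b r => rfl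

def eMat (x : ℤ) : Matrix (Fin 2) (Fin 2) ℤ := !![x, -1; 1, 0]

def mK (w : List ℤ) : Matrix (Fin 2) (Fin 2) ℤ := (w.map eMat).prod

def ii (w : List ℤ) : ℤ := if 2 ≤ w.length then contKs w.tail.dropLast else 0

lemma mK_append (u v : List ℤ) : mK (u ++ v) = mK u * mK v := by
  simp [mK]

theorem mK_eq : ∀ (w : List ℤ), w ≠ [] →
    mK w = !![contKs w, -(contKs w.dropLast); contKs w.tail, -(ii w)]
  | [x], _ => by
    simp [mK, eMat, ii, contKs_single, contKs_nil]
  | x :: b :: r, _ => by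
    have ih := mK_eq (b :: r) (by simp)
    have hstep : mK (x :: b :: r) = eMat x * mK (b :: r) := by
      simp [mK]
    rw [hstep, ih, eMat, Matrix.mul_fin_two]
    have e11 : contKs (x :: b :: r) = x * contKs (b :: r) - contKs (b :: r).tail :=
      contKs_cons x (b :: r) (by simp)
    have e22 : ii (x :: b :: r) = contKs (b :: r).dropLast := by
      simp [ii]
    have e12 : contKs (x :: (b :: r).dropLast) =
        x * contKs (b :: r).dropLast - ii (b :: r) := by
      cases r with
      | nil => simp [ii, contKs_single, contKs_nil]
      | cons c r' =>
        have hne : ((b :: c :: r').dropLast : List ℤ) ≠ [] := by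
          simp [List.dropLast]
        rw [contKs_cons x _ hne, ii]
        simp only [List.length_cons]
        rw [if_pos (by omega), tail_dropLast']
    ext i j
    fin_cases i <;> fin_cases j <;>
      simp [e11, e12, e22, Matrix.cons_val_zero, Matrix.cons_val_one] <;> ring

lemma rev_dropLast (l : List ℤ) : l.reverse.dropLast = l.tail.reverse := by
  have h := List.tail_reverse (l := l.reverse)
  rw [List.reverse_reverse] at h
  rw [h, List.reverse_reverse]

lemma ii_reverse (l : List ℤ) : ii l.reverse = ii l := by
  unfold ii
  rw [List.length_reverse]
  by_cases h : 2 ≤ l.length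
  · rw [if_pos h, if_pos h]
    rw [List.tail_reverse, rev_dropLast, contKs_reverse,
      tail_dropLast']
  · rw [if_neg h, if_neg h]

lemma cyc_formula (u v : List ℤ) (hu : u ≠ []) (hv : v ≠ []) :
    cycKs (u ++ v) = contKs u * contKs v - contKs u.dropLast * contKs v.tail
      - contKs u.tail * contKs v.dropLast + ii u * ii v := by
  have hM := mK_append u v
  rw [mK_eq u hu, mK_eq v hv, mK_eq (u ++ v) (by simp [hu]), Matrix.mul_fin_two] at hM
  have h00 : contKs (u ++ v)
      = contKs u * contKs v + -contKs u.dropLast * contKs v.tail := by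
    have := congrFun (congrFun hM 0) 0
    simpa using this
  have h11 : -(ii (u ++ v))
      = contKs u.tail * -contKs v.dropLast + -ii u * -ii v := by
    have := congrFun (congrFun hM 1) 1
    simpa using this
  have hlen : 2 ≤ (u ++ v).length := by
    rcases List.exists_cons_of_ne_nil hu with ⟨a, u', rfl⟩
    rcases List.exists_cons_of_ne_nil hv with ⟨b, v', rfl⟩
    simp; omega
  have hcyc : cycKs (u ++ v) = contKs (u ++ v) - ii (u ++ v) := by
    unfold cycKs ii
    rw [if_pos hlen]
  rw [hcyc, h00]
  have : ii (u ++ v) = -(contKs u.tail * -contKs v.dropLast + -ii u * -ii v) := by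
    linarith [h11]
  rw [this]
  ring

lemma wlt_key1 (w : List ℤ) (hg : good w) (hw : w ≠ []) (h : wlt w w.reverse) :
    contKs w.dropLast < contKs w.tail := by
  rcases h with ⟨hne, hpre⟩ | ⟨p, s, t, x, y, hxy, he1, he2⟩
  · exact absurd (hpre.eq_of_length (by simp)) hne
  · have key := lexlt p s t x y hxy (he1 ▸ hg) (he2 ▸ good_reverse hg)
    rw [← he1, ← he2, contKs_reverse, List.tail_reverse,
      contKs_reverse] at key
    have hpos : (0:ℤ) < contKs w := lt_of_lt_of_le zero_lt_one (contKs_pos w hg)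
    exact lt_of_mul_lt_mul_left (by linarith [key]) (le_of_lt hpos)

lemma wlt_key2 (w : List ℤ) (hg : good w) (hw : w ≠ []) (h : wlt w.reverse w) :
    contKs w.tail < contKs w.dropLast := by
  rcases h with ⟨hne, hpre⟩ | ⟨p, s, t, x, y, hxy, he1, he2⟩
  · exact absurd (hpre.eq_of_length (by simp)) hne
  · have key := lexlt p s t x y hxy (he1 ▸ good_reverse hg) (he2 ▸ hg)
    rw [← he1, ← he2, contKs_reverse, List.tail_reverse,
      contKs_reverse] at key
    have hpos : (0:ℤ) < contKs w := lt_of_lt_of_le zero_lt_one (contKs_pos w hg)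
    exact lt_of_mul_lt_mul_left (by linarith [key]) (le_of_lt hpos)


theorem stmt8 (u v : List ℤ) (hu : u ≠ []) (hv : v ≠ [])
    (h2 : ∀ i ∈ u ++ v, 2 ≤ i)
    (hur : u ≠ u.reverse) (hvr : v ≠ v.reverse)
    (hyp : (wlt u u.reverse ∧ wlt v.reverse v) ∨ (wlt u.reverse u ∧ wlt v v.reverse)) :
    cycKs (u ++ v) < cycKs (u.reverse ++ v) := by
  have hgu : good u := fun i hi => h2 i (by simp [hi])
  have hgv : good v := fun i hi => h2 i (by simp [hi])
  have f1 := cyc_formula u v hu hv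
  have f2 := cyc_formula u.reverse v (by simpa using hu) hv
  rw [rev_dropLast, List.tail_reverse, ii_reverse] at f2
  simp only [contKs_reverse] at f2
  have hdiff : cycKs (u.reverse ++ v) - cycKs (u ++ v)
      = (contKs u.dropLast - contKs u.tail) * (contKs v.tail - contKs v.dropLast) := by
    rw [f1, f2]; ring
  rcases hyp with ⟨ha, hb⟩ | ⟨ha, hb⟩
  · have a1 := wlt_key1 u hgu hu ha
    have a2 := wlt_key2 v hgv hv hb
    have := mul_pos_of_neg_of_neg
      (show contKs u.dropLast - contKs u.tail < 0 by linarith)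
      (show contKs v.tail - contKs v.dropLast < 0 by linarith)
    linarith [hdiff]
  · have a1 := wlt_key2 u hgu hu ha
    have a2 := wlt_key1 v hgv hv hb
    have := mul_pos
      (show (0:ℤ) < contKs u.dropLast - contKs u.tail by linarith)
      (show (0:ℤ) < contKs v.tail - contKs v.dropLast by linarith)
    linarith [hdiff]
end

section
/- Let ω be a cyclic word over an ordered alphabet A such that no factorization ω = uv into nonempty non-palindromes is synchronizing, and let j be the largest letter occurring in ω. Then all occurrences of j in ω are clustered together: ω admits a linear representation of the form j^N x with N ≥ 1 and x containing no occurrence of j. -/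
/-- The alternating lexicographic order on words: at the first difference, the order of
letters is used at even (0-based) positions and reversed at odd positions; if `v` is a
proper prefix of `u` then `u ≺_alt v` when `|v|` is even and `v ≺_alt u` when `|v|` is odd. -/
def altlt {A : Type*} [LinearOrder A] (u v : List A) : Prop :=
  (v ≠ u ∧ v <+: u ∧ Even v.length) ∨ (u ≠ v ∧ u <+: v ∧ Odd u.length) ∨
    ∃ (p s t : List A) (x y : A), u = p ++ x :: s ∧ v = p ++ y :: t ∧
      ((Even p.length ∧ x < y) ∨ (Odd p.length ∧ y < x))

/-- `r` is a linear representation (rotation) of the cyclic word represented by `w`. -/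
def isRot {A : Type*} (w r : List A) : Prop := ∃ s t : List A, w = s ++ t ∧ r = t ++ s

/-- `f` is a factor of the cyclic word represented by `w`. -/
def isCFactor {A : Type*} (f w : List A) : Prop := ∃ r : List A, isRot w r ∧ f <:+: r

/-- The cyclic word represented by `w` is singular: every factorization of it into two
nonempty non-palindromes `u`, `v` is synchronizing (`u ≺ u*` iff `v ≺ v*`). -/
def cyclicSingular {A : Type*} [LinearOrder A] (w : List A) : Prop :=
  ∀ u v : List A, u ≠ [] → v ≠ [] → isRot w (u ++ v) →
    u ≠ u.reverse → v ≠ v.reverse → (wlt u u.reverse ↔ wlt v v.reverse)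

/-- `δ_b(w) = Σ_{c>b} |w|_c − Σ_{a<b} |w|_a`. -/
def deltaW {A : Type*} [LinearOrder A] [Fintype A] (w : List A) (b : A) : ℤ :=
  (∑ c ∈ Finset.univ.filter (fun c => b < c), (w.count c : ℤ)) -
    (∑ a ∈ Finset.univ.filter (fun a => a < b), (w.count a : ℤ))

lemma isRot_trans {A : Type*} {w r r' : List A} (h1 : isRot w r) (h2 : isRot r r') :
    isRot w r' := by
  obtain ⟨s, t, hw, hr⟩ := h1
  obtain ⟨s', t', hr', hr''⟩ := h2
  have hrot : List.IsRotated w r' := by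
    have e1 : List.IsRotated w r := ⟨s.length, by rw [hw, hr, List.rotate_append_length_eq]⟩
    have e2 : List.IsRotated r r' := ⟨s'.length, by rw [hr', hr'', List.rotate_append_length_eq]⟩
    exact e1.trans e2
  obtain ⟨n, hn⟩ := hrot
  refine ⟨w.take (n % w.length), w.drop (n % w.length), (List.take_append_drop _ _).symm, ?_⟩
  rw [← hn, ← List.rotate_eq_drop_append_take_mod]

lemma not_wlt_self_rev {A : Type*} [LinearOrder A] {j : A} {l : List A}
    (hhead : l.head? = some j) (hmax : ∀ x ∈ l, x ≤ j)
    (hlast : l.getLast? ≠ some j) :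
    l ≠ l.reverse ∧ ¬ wlt l l.reverse := by
  obtain ⟨m, rfl⟩ : ∃ m, l = j :: m := by
    cases l with
    | nil => simp at hhead
    | cons a m =>
      simp only [List.head?_cons, Option.some.injEq] at hhead
      exact ⟨m, by rw [hhead]⟩
  set l := j :: m with hl
  have hlne : l ≠ [] := by simp [hl]
  set c := l.getLast hlne with hc
  have hcl : l.getLast? = some c := List.getLast?_eq_getLast hlne
  have hcj : c ≠ j := fun h => hlast (by rw [hcl, h])
  have hclt : c < j := lt_of_le_of_ne (hmax c (List.getLast_mem hlne)) hcj
  have hrevhead : l.reverse.head? = some c := by rw [List.head?_reverse, hcl]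
  obtain ⟨m', hm'⟩ : ∃ m', l.reverse = c :: m' := by
    cases hrev : l.reverse with
    | nil => rw [hrev] at hrevhead; simp at hrevhead
    | cons a m' =>
      rw [hrev] at hrevhead
      simp at hrevhead
      exact ⟨m', by rw [hrevhead]⟩
  constructor
  · intro h
    rw [hm'] at h
    have : j = c := by injection h
    exact hcj this.symm
  · intro hw
    rcases hw with ⟨_, hpre⟩ | ⟨p, s, t, x, y, hxy, hu, hv⟩
    · obtain ⟨t, ht⟩ := hpre
      rw [hm'] at ht
      have : j = c := by
        have := ht
        simp [hl] at this
        exact this.1.symm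
      exact hcj this.symm
    · cases p with
      | nil =>
        simp only [List.nil_append] at hu hv
        have hx : x = j := by injection hu with h _; exact h.symm
        have hy : y = c := by rw [hm'] at hv; injection hv with h _; exact h.symm
        rw [hx, hy] at hxy
        exact absurd hxy (not_lt.mpr hclt.le)
      | cons a p' =>
        have ha1 : a = j := by
          have := hu; simp [hl] at this; exact this.1.symm
        have ha2 : a = c := by
          rw [hm'] at hv
          have := hv; simp at this; exact this.1.symm
        exact hcj (ha2 ▸ ha1 ▸ rfl)

lemma split_first {A : Type*} [DecidableEq A] {l : List A} {j : A} (h : j ∈ l) :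
    ∃ α β : List A, l = α ++ j :: β ∧ ∀ x ∈ α, x ≠ j := by
  induction l with
  | nil => cases h
  | cons a l ih =>
    by_cases ha : a = j
    · exact ⟨[], l, by simp [ha], by simp⟩
    · have hl : j ∈ l := by
        rcases List.mem_cons.mp h with h1 | h1
        · exact absurd h1.symm ha
        · exact h1
      obtain ⟨α, β, h1, h2⟩ := ih hl
      refine ⟨a :: α, β, by rw [h1, List.cons_append], ?_⟩
      intro x hx
      rcases List.mem_cons.mp hx with h3 | h3
      · rw [h3]; exact ha
      · exact h2 x h3

lemma split_run {A : Type*} [DecidableEq A] (l : List A) (j : A) :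
    ∃ (n : ℕ) (t : List A), l = List.replicate n j ++ t ∧ t.head? ≠ some j := by
  induction l with
  | nil => exact ⟨0, [], rfl, by simp⟩
  | cons a l ih =>
    by_cases ha : a = j
    · obtain ⟨n, t, h1, h2⟩ := ih
      exact ⟨n + 1, t, by rw [List.replicate_succ, List.cons_append, ← h1, ha], h2⟩
    · exact ⟨0, a :: l, rfl, by simpa using ha⟩

theorem stmt10 {A : Type*} [LinearOrder A] (w : List A) (j : A)
    (hnosync : ∀ u v : List A, u ≠ [] → v ≠ [] → isRot w (u ++ v) →
      u ≠ u.reverse → v ≠ v.reverse → ¬ (wlt u u.reverse ↔ wlt v v.reverse))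
    (hj : j ∈ w) (hmax : ∀ x ∈ w, x ≤ j) :
    ∃ (N : ℕ) (x : List A), 1 ≤ N ∧ isRot w (List.replicate N j ++ x) ∧ j ∉ x := by
  by_cases hall : ∀ x ∈ w, x = j
  · refine ⟨w.length, [], ?_, ?_, by simp⟩
    · have : w ≠ [] := List.ne_nil_of_mem hj
      have := List.length_pos_iff.mpr this
      omega
    · have hw : w = List.replicate w.length j := List.eq_replicate_of_mem hall
      exact ⟨[], w, by simp, by simpa using hw.symm⟩
  · push_neg at hall
    obtain ⟨c, hcw, hcj⟩ := hall
    obtain ⟨a, b, hab⟩ := List.append_of_mem hcw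
    have hrot0 : isRot w (b ++ a ++ [c]) := ⟨a ++ [c], b, by simp [hab], by simp⟩
    have hjr0 : j ∈ b ++ a ++ [c] := by
      have := hj; rw [hab] at this
      simp only [List.mem_append, List.mem_cons, List.mem_singleton] at this ⊢
      rcases this with h | h | h
      · tauto
      · exact absurd h.symm hcj
      · tauto
    have hlast0 : (b ++ a ++ [c]).getLast? = some c := List.getLast?_concat
    obtain ⟨α, β, hsplit, hαmem⟩ := split_first hjr0
    have hrot1 : isRot w (j :: (β ++ α)) :=
      isRot_trans hrot0 ⟨α, j :: β, hsplit, by simp⟩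
    have hmem1 : ∀ x ∈ j :: (β ++ α), x ∈ w := by
      obtain ⟨s, t, h1, h2⟩ := hrot1
      intro x hx
      rw [h1]; rw [h2] at hx
      simp only [List.mem_append] at hx ⊢
      tauto
    have hlast1 : (j :: (β ++ α)).getLast? ≠ some j := by
      rcases eq_or_ne α [] with hαnil | hαnil
      · rw [hαnil] at hsplit
        rw [hαnil, List.append_nil, ← List.nil_append (j :: β), ← hsplit, hlast0]
        simpa using hcj
      · have h1 : (j :: (β ++ α)).getLast? = α.getLast? := by
          rw [show j :: (β ++ α) = (j :: β) ++ α from rfl]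
          exact List.getLast?_append_of_ne_nil _ hαnil
        rw [h1, List.getLast?_eq_getLast hαnil]
        simpa using hαmem _ (List.getLast_mem hαnil)
    obtain ⟨n, t1, hmsplit, hheadt1⟩ := split_run (β ++ α) j
    have hr1eq : j :: (β ++ α) = List.replicate (n + 1) j ++ t1 := by
      rw [hmsplit, List.replicate_succ, List.cons_append]
    by_cases hjt : j ∈ t1
    · exfalso
      obtain ⟨x2, y, ht1sp, hx2mem⟩ := split_first hjt
      have hx2ne : x2 ≠ [] := by
        intro h
        rw [h, List.nil_append] at ht1sp
        exact hheadt1 (by rw [ht1sp]; rfl)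
      set u : List A := List.replicate (n + 1) j ++ x2 with hu
      set v : List A := j :: y with hv
      have huv : u ++ v = j :: (β ++ α) := by
        rw [hu, hv, hr1eq, ht1sp, List.append_assoc]
      have hrotuv : isRot w (u ++ v) := huv ▸ hrot1
      have hune : u ≠ [] := by simp [hu]
      have hvne : v ≠ [] := by simp [hv]
      have humem : ∀ x ∈ u, x ≤ j := fun x hx =>
        hmax x (hmem1 x (huv ▸ (List.mem_append.mpr (Or.inl hx))))
      have hvmem : ∀ x ∈ v, x ≤ j := fun x hx =>
        hmax x (hmem1 x (huv ▸ (List.mem_append.mpr (Or.inr hx))))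
      have huhead : u.head? = some j := by
        rw [hu, List.replicate_succ]
        rfl
      have hvhead : v.head? = some j := rfl
      have hulast : u.getLast? ≠ some j := by
        rw [hu, List.getLast?_append_of_ne_nil _ hx2ne, List.getLast?_eq_getLast hx2ne]
        simpa using hx2mem _ (List.getLast_mem hx2ne)
      have hvlast : v.getLast? ≠ some j := by
        have h1 : (u ++ v).getLast? = v.getLast? :=
          List.getLast?_append_of_ne_nil _ hvne
        rw [← h1, huv]
        exact hlast1
      obtain ⟨huner, hunw⟩ := not_wlt_self_rev huhead humem hulast
      obtain ⟨hvner, hvnw⟩ := not_wlt_self_rev hvhead hvmem hvlast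
      exact hnosync u v hune hvne hrotuv huner hvner (iff_of_false hunw hvnw)
    · refine ⟨n + 1, t1, by omega, ?_, hjt⟩
      rw [← hr1eq]
      exact hrot1
end
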